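/- Let n ≥ 1 and let A be a plucking on [n-1], i.e. a nonempty collection of subsets of [n-1] = {1,…,n-1} that is upward closed under inclusion. Let M_1, …, M_k be the inclusion-minimal members of A, and let S ∈ A. If there exists an element i ∈ S with i ∉ M_1 ∪ ⋯ ∪ M_k, then χ_A(S) = 0, where χ_A(S) = Σ_{T ∈ A, T ⊆ S} (−1)^{|S|−|T|}. -/

import Mathlib

/-- If `A` is a plucking on `[n-1]` (a nonempty upward-closed family of
subsets of `{1,…,n-1}`), `S ∈ A`, and some `i ∈ S` lies in no inclusion-minimal
member of `A`, then `χ_A(S) = Σ_{T ∈ A, T ⊆ S} (−1)^{|S|−|T|} = 0`. -/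
theorem stmt0 (n : ℕ) (hn : 1 ≤ n) (A : Finset (Finset ℕ))
    (hne : A.Nonempty)
    (hsub : ∀ S ∈ A, S ⊆ Finset.Ico 1 n)
    (hup : ∀ S ∈ A, ∀ T : Finset ℕ, S ⊆ T → T ⊆ Finset.Ico 1 n → T ∈ A)
    (S : Finset ℕ) (hS : S ∈ A) (i : ℕ) (hiS : i ∈ S)
    (hi : ∀ M ∈ A, (∀ M' ∈ A, M' ⊆ M → M' = M) → i ∉ M) :
    (∑ T ∈ A.filter (· ⊆ S), (-1 : ℤ) ^ (S.card - T.card)) = 0 := by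
  classical
  -- every member of A contains an inclusion-minimal member of A
  have hmin : ∀ T ∈ A, ∃ M ∈ A, M ⊆ T ∧ ∀ M' ∈ A, M' ⊆ M → M' = M := by
    intro T hT
    obtain ⟨M, hMle, hMmin⟩ := (A.filter (· ⊆ T)).exists_le_minimal
      (by simp [hT] : T ∈ A.filter (· ⊆ T))
    have hM : M ∈ A ∧ M ⊆ T := by simpa using hMmin.prop
    refine ⟨M, hM.1, hM.2, fun M' hM' hsub' => ?_⟩
    exact le_antisymm hsub' (hMmin.le_of_le (by simp [hM', hsub'.trans hM.2]) hsub')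
  -- erasing i from a member of A keeps it in A
  have herase : ∀ T ∈ A, T.erase i ∈ A := by
    intro T hT
    obtain ⟨M, hM, hMT, hMmin⟩ := hmin T hT
    have hiM : i ∉ M := hi M hM hMmin
    exact hup M hM (T.erase i)
      (fun x hx => Finset.mem_erase.mpr ⟨fun h => hiM (h ▸ hx), hMT hx⟩)
      ((Finset.erase_subset i T).trans (hsub T hT))
  refine Finset.sum_involution
    (fun T _ => if i ∈ T then T.erase i else insert i T) ?_ ?_ ?_ ?_
  · intro T hT
    simp only [Finset.mem_filter] at hT
    have hTS : T.card ≤ S.card := Finset.card_le_card hT.2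
    by_cases h : i ∈ T
    · simp only [h, if_true, Finset.card_erase_of_mem h]
      have h1 : 1 ≤ T.card := Finset.card_pos.mpr ⟨i, h⟩
      have : S.card - (T.card - 1) = (S.card - T.card) + 1 := by omega
      rw [this, pow_succ]; ring
    · simp only [h, if_false, Finset.card_insert_of_notMem h]
      have hins : insert i T ⊆ S := Finset.insert_subset hiS hT.2
      have h1 : T.card + 1 ≤ S.card := by
        simpa [Finset.card_insert_of_notMem h] using Finset.card_le_card hins
      have : S.card - T.card = (S.card - (T.card + 1)) + 1 := by omega
      rw [this, pow_succ]; ring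
  · intro T hT _
    by_cases h : i ∈ T
    · simp only [h, if_true]
      exact fun he => (Finset.mem_erase.mp (he ▸ h)).1 rfl
    · simp only [h, if_false]
      exact fun he => h (he ▸ Finset.mem_insert_self i T)
  · intro T hT
    simp only [Finset.mem_filter] at hT ⊢
    by_cases h : i ∈ T
    · simp only [h, if_true]
      exact ⟨herase T hT.1, (Finset.erase_subset i T).trans hT.2⟩
    · simp only [h, if_false]
      have hins : insert i T ⊆ S := Finset.insert_subset hiS hT.2
      exact ⟨hup T hT.1 _ (Finset.subset_insert i T) (hins.trans (hsub S hS)), hins⟩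
  · intro T hT
    by_cases h : i ∈ T
    · simp [h, Finset.insert_erase h]
    · simp [h, Finset.erase_insert h]
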